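/- arXiv:2602.09505 — 3 statements merged into one kernel-verified Lean document; each statement's English description precedes it below -/
import Mathlib

section
/- Assume the singular value expansion setting. Then the Hilbert-space adjoint of T factors as T* = V ∘ M_σ ∘ W*, i.e., for every g ∈ G one has T* g = V(σ · (W* g)), where σ · (W* g) denotes the pointwise product in L²(μ). -/
open MeasureTheory RealInnerProductSpace

/-- In the singular value expansion setting, the adjoint factors as
`T* = V ∘ M_σ ∘ W*`: for every `g ∈ G`, `T* g = V(σ · (W* g))`. -/
theorem adjoint_factorization
    {𝓜 : Type} [MeasurableSpace 𝓜] {μ : Measure 𝓜}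
    {F G : Type} [NormedAddCommGroup F] [InnerProductSpace ℝ F] [CompleteSpace F]
    [NormedAddCommGroup G] [InnerProductSpace ℝ G] [CompleteSpace G]
    (σ : 𝓜 → ℝ) (hσ_meas : Measurable σ) (hσ_bdd : MemLp σ ⊤ μ)
    (hσ_pos : ∀ᵐ x ∂μ, 0 < σ x)
    (V : Lp ℝ 2 μ ≃ₗᵢ[ℝ] F) (W : Lp ℝ 2 μ →ₗᵢ[ℝ] G)
    (T : F →L[ℝ] G)
    (hT : ∀ u : Lp ℝ 2 μ, ∃ v : Lp ℝ 2 μ,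
      (⇑v =ᵐ[μ] fun x => σ x * u x) ∧ T (V u) = W v)
    (g : G) :
    ∃ u : Lp ℝ 2 μ,
      (⇑u =ᵐ[μ] fun x => σ x *
        (ContinuousLinearMap.adjoint W.toContinuousLinearMap g) x) ∧
      ContinuousLinearMap.adjoint T g = V u := by
  set h : Lp ℝ 2 μ := ContinuousLinearMap.adjoint W.toContinuousLinearMap g with hh
  have hmem : MemLp (σ • (⇑h : 𝓜 → ℝ)) 2 μ :=
    MemLp.smul (Lp.memLp h) hσ_bdd
  refine ⟨hmem.toLp _, hmem.coeFn_toLp, ?_⟩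
  -- show adjoint T g = V u
  apply ext_inner_right ℝ
  intro f
  obtain ⟨w, rfl⟩ := V.surjective f
  obtain ⟨v, hv1, hv2⟩ := hT w
  rw [ContinuousLinearMap.adjoint_inner_left, hv2, V.inner_map_map]
  have : ⟪g, W v⟫ = ⟪h, v⟫ := by
    rw [hh, ContinuousLinearMap.adjoint_inner_left]
    rfl
  rw [this, L2.inner_def, L2.inner_def]
  apply integral_congr_ae
  filter_upwards [hv1, hmem.coeFn_toLp] with x h1 h2
  simp only [RCLike.inner_apply, conj_trivial, h1]
  erw [h2]
  simp only [Pi.smul_apply, smul_eq_mul, Pi.mul_apply]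
  ring
end

section
/- Let (𝓜, μ) be a measure space and σ : 𝓜 → ℝ measurable, essentially bounded, with σ(x) > 0 for μ-a.e. x. Then the multiplication operator M_σ : L²(μ) → L²(μ), u ↦ σ·u, has dense range in L²(μ). Consequently, in the singular value expansion setting the range of W equals the closure of the range of T, and hence ker T* = ker W* = (ran T)^⊥. -/
open MeasureTheory RealInnerProductSpace

private lemma ker_adjoint_eq_orth {E G : Type} [NormedAddCommGroup E] [InnerProductSpace ℝ E]
    [CompleteSpace E] [NormedAddCommGroup G] [InnerProductSpace ℝ G] [CompleteSpace G]
    (A : E →L[ℝ] G) :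
    LinearMap.ker (ContinuousLinearMap.adjoint A : G →ₗ[ℝ] E) = (LinearMap.range (A : E →ₗ[ℝ] G))ᗮ := by
  ext g
  simp only [LinearMap.mem_ker, Submodule.mem_orthogonal, ContinuousLinearMap.coe_coe]
  constructor
  · rintro h _ ⟨f, rfl⟩
    rw [ContinuousLinearMap.coe_coe, real_inner_comm, ← ContinuousLinearMap.adjoint_inner_left, h, inner_zero_left]
  · intro h
    have h0 : (inner ℝ (ContinuousLinearMap.adjoint A g) (ContinuousLinearMap.adjoint A g) : ℝ) = 0 := by
      rw [ContinuousLinearMap.adjoint_inner_left, real_inner_comm]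
      exact h _ ⟨ContinuousLinearMap.adjoint A g, rfl⟩
    exact inner_self_eq_zero.mp h0

/-- Multiplication by an a.e. positive, essentially bounded `σ` has dense
range in `L²(μ)`; consequently, in the singular value expansion setting,
`ran W = closure (ran T)` and `ker T* = ker W* = (ran T)ᗮ`. -/
theorem multiplication_dense_range_and_kernels
    {𝓜 : Type} [MeasurableSpace 𝓜] {μ : Measure 𝓜}
    {F G : Type} [NormedAddCommGroup F] [InnerProductSpace ℝ F] [CompleteSpace F]
    [NormedAddCommGroup G] [InnerProductSpace ℝ G] [CompleteSpace G]
    (σ : 𝓜 → ℝ) (hσ_meas : Measurable σ) (hσ_bdd : MemLp σ ⊤ μ)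
    (hσ_pos : ∀ᵐ x ∂μ, 0 < σ x)
    (V : Lp ℝ 2 μ ≃ₗᵢ[ℝ] F) (W : Lp ℝ 2 μ →ₗᵢ[ℝ] G)
    (T : F →L[ℝ] G)
    (hT : ∀ u : Lp ℝ 2 μ, ∃ v : Lp ℝ 2 μ,
      (⇑v =ᵐ[μ] fun x => σ x * u x) ∧ T (V u) = W v) :
    Dense {v : Lp ℝ 2 μ | ∃ u : Lp ℝ 2 μ, ⇑v =ᵐ[μ] fun x => σ x * u x} ∧
    Set.range W = closure (Set.range T) ∧
    LinearMap.ker (ContinuousLinearMap.adjoint T : G →ₗ[ℝ] F) =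
      LinearMap.ker (ContinuousLinearMap.adjoint W.toContinuousLinearMap : G →ₗ[ℝ] Lp ℝ 2 μ) ∧
    LinearMap.ker (ContinuousLinearMap.adjoint T : G →ₗ[ℝ] F) = (LinearMap.range (T : F →ₗ[ℝ] G))ᗮ := by
  -- The set in question is a submodule.
  let K : Submodule ℝ (Lp ℝ 2 μ) :=
  { carrier := {v : Lp ℝ 2 μ | ∃ u : Lp ℝ 2 μ, ⇑v =ᵐ[μ] fun x => σ x * u x}
    zero_mem' := ⟨0, by
      filter_upwards [Lp.coeFn_zero ℝ 2 μ] with x hx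
      simp only [hx, Pi.zero_apply, mul_zero]⟩
    add_mem' := by
      rintro v₁ v₂ ⟨u₁, h₁⟩ ⟨u₂, h₂⟩
      refine ⟨u₁ + u₂, ?_⟩
      filter_upwards [h₁, h₂, Lp.coeFn_add v₁ v₂, Lp.coeFn_add u₁ u₂] with x e1 e2 e3 e4
      simp only [Pi.add_apply] at e3 e4 ⊢
      rw [e3, e1, e2, e4]; ring
    smul_mem' := by
      rintro c v ⟨u, h⟩
      refine ⟨c • u, ?_⟩
      filter_upwards [h, Lp.coeFn_smul c v, Lp.coeFn_smul c u] with x e1 e2 e3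
      simp only [Pi.smul_apply, smul_eq_mul] at e2 e3 ⊢
      rw [e2, e1, e3]; ring }
  -- Its orthogonal complement is trivial.
  have hKbot : Kᗮ = ⊥ := by
    rw [Submodule.eq_bot_iff]
    intro v hv
    have hmem : MemLp (σ • (⇑v : 𝓜 → ℝ)) 2 μ := (Lp.memLp v).smul (r := 2) hσ_bdd
    set w := hmem.toLp _ with hw
    have hwcoe : ⇑w =ᵐ[μ] σ • ⇑v := hmem.coeFn_toLp
    have hwK : w ∈ K := by
      refine ⟨v, hwcoe.trans ?_⟩
      filter_upwards with x
      simp [Pi.smul_apply, smul_eq_mul]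
    have hinner : (inner ℝ w v : ℝ) = 0 := (Submodule.mem_orthogonal K v).mp hv w hwK
    have hcongr : (fun x => σ x * (v x * v x)) =ᵐ[μ] fun x => (inner ℝ (w x) (v x) : ℝ) := by
      filter_upwards [hwcoe] with x hx
      simp only [RCLike.inner_apply, conj_trivial, hx, Pi.smul_apply, Pi.mul_apply, smul_eq_mul]
      ring
    have hint : Integrable (fun x => σ x * (v x * v x)) μ :=
      (L2.integrable_inner (𝕜 := ℝ) w v).congr hcongr.symm
    have h0 : ∫ x, σ x * (v x * v x) ∂μ = 0 := by
      rw [integral_congr_ae hcongr, ← L2.inner_def, hinner]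
    have hnn : 0 ≤ᵐ[μ] fun x => σ x * (v x * v x) := by
      filter_upwards [hσ_pos] with x hx
      exact mul_nonneg hx.le (mul_self_nonneg _)
    have hz : (fun x => σ x * (v x * v x)) =ᵐ[μ] 0 :=
      (integral_eq_zero_iff_of_nonneg_ae hnn hint).mp h0
    rw [Lp.eq_zero_iff_ae_eq_zero]
    filter_upwards [hz, hσ_pos] with x h1 h2
    have : v x * v x = 0 := by
      rcases mul_eq_zero.mp h1 with h | h
      · exact absurd h h2.ne'
      · exact h
    simpa using mul_self_eq_zero.mp this
  have hdense : Dense (K : Set (Lp ℝ 2 μ)) :=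
    Submodule.dense_iff_topologicalClosure_eq_top.mpr
      (Submodule.topologicalClosure_eq_top_iff.mpr hKbot)
  -- range T as a set is W '' K
  have hrange : Set.range ⇑T = ⇑W '' (K : Set (Lp ℝ 2 μ)) := by
    ext y
    constructor
    · rintro ⟨f, rfl⟩
      obtain ⟨v, hv, hTv⟩ := hT (V.symm f)
      refine ⟨v, ⟨V.symm f, hv⟩, ?_⟩
      rw [← hTv, V.apply_symm_apply]
    · rintro ⟨v, ⟨u, hu⟩, rfl⟩
      obtain ⟨v', hv', hTv'⟩ := hT u
      have hvv : v = v' := by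
        ext1
        filter_upwards [hu, hv'] with x e1 e2
        rw [e1, e2]
      exact ⟨V u, by rw [hTv', hvv]⟩
  have hrange_eq : Set.range ⇑W = closure (Set.range ⇑T) := by
    rw [hrange, (W.isometry.isClosedEmbedding).closure_image_eq, hdense.closure_eq,
      Set.image_univ]
  -- orthogonal complements of the two ranges agree
  have horth : (LinearMap.range (T : F →ₗ[ℝ] G))ᗮ = (LinearMap.range (W.toContinuousLinearMap : Lp ℝ 2 μ →ₗ[ℝ] G))ᗮ := by
    ext g
    simp only [Submodule.mem_orthogonal]
    constructor
    · intro h y hy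
      obtain ⟨v, hv⟩ := hy
      have hyW : (y : G) ∈ Set.range ⇑W := ⟨v, hv⟩
      have hycl : (y : G) ∈ closure (Set.range ⇑T) := hrange_eq ▸ hyW
      have hcl : closure (Set.range ⇑T) ⊆ {z : G | (inner ℝ z g : ℝ) = 0} :=
        closure_minimal (by rintro _ ⟨f, rfl⟩; exact h _ ⟨f, rfl⟩)
          (isClosed_eq (continuous_id.inner continuous_const) continuous_const)
      exact hcl hycl
    · intro h y hy
      obtain ⟨f, rfl⟩ := hy
      have hmem : T f ∈ Set.range ⇑W := by
        rw [hrange_eq]; exact subset_closure ⟨f, rfl⟩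
      obtain ⟨v, hv⟩ := hmem
      rw [ContinuousLinearMap.coe_coe, ← hv]
      exact h _ ⟨v, hv.symm ▸ hv⟩
  refine ⟨hdense, ?_, ?_, ker_adjoint_eq_orth T⟩
  · exact hrange_eq
  · rw [ker_adjoint_eq_orth, ker_adjoint_eq_orth, horth]
end

section
/- Let F and G be real Hilbert spaces, (eₙ)_{n∈ℕ} a Hilbert (orthonormal) basis of F, (gₙ)_{n∈ℕ} an orthonormal family in G, and (σₙ)_{n∈ℕ} a bounded sequence of positive reals. Let T : F → G be the bounded operator T f = Σₙ σₙ ⟨eₙ, f⟩ gₙ. Let q : ℝ₊* × ℝ₊ → ℝ satisfy |q(α, σₙ)| ≤ M for all α > 0, n ∈ ℕ and some constant M, and lim_{α→0⁺} q(α, σₙ) = 1 for every n. Then for every f ∈ F, the elements f_α := Σₙ q(α, σₙ) ⟨eₙ, f⟩ eₙ are well defined, f_α = R_α(Tf) where R_α g = Σₙ (q(α,σₙ)/σₙ)⟨gₙ, g⟩ eₙ, and ‖f_α − f‖_F → 0 as α → 0⁺. -/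
open Filter Topology

lemma inner_eq_of_hasSum_orthonormal {E : Type} [NormedAddCommGroup E]
    [InnerProductSpace ℝ E] {v : ℕ → E} (hv : Orthonormal ℝ v) {a : ℕ → ℝ} {x : E}
    (h : HasSum (fun m => a m • v m) x) (n : ℕ) :
    inner (𝕜 := ℝ) (v n) x = a n := by
  have h2 := h.mapL (innerSL ℝ (v n))
  have heq : (fun m => (innerSL ℝ (v n)) (a m • v m)) =
      fun m => if m = n then a n else 0 := by
    funext m
    by_cases hm : m = n
    · subst hm
      have h1 : ‖v m‖ = 1 := hv.1 m
      simp [inner_smul_right, real_inner_self_eq_norm_sq, h1]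
    · have := hv.2 (fun hnm => hm hnm.symm)
      simp [hm, inner_smul_right, this]
  rw [heq] at h2
  simpa using h2.unique (hasSum_ite_eq n (a n))

/-- Compact-operator (series) form of the convergence of spectral
regularization: under (A1) and (A3), the regularized elements
`f_α = Σₙ q(α,σₙ)⟨eₙ,f⟩eₙ` are well defined, equal `R_α (T f)` with
`R_α g = Σₙ (q(α,σₙ)/σₙ)⟨gₙ,g⟩eₙ`, and converge to `f` as `α → 0⁺`. -/
theorem series_regularization_converges
    {F G : Type} [NormedAddCommGroup F] [InnerProductSpace ℝ F] [CompleteSpace F]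
    [NormedAddCommGroup G] [InnerProductSpace ℝ G] [CompleteSpace G]
    (e : HilbertBasis ℕ ℝ F) (g' : ℕ → G) (hg' : Orthonormal ℝ g')
    (σn : ℕ → ℝ) (hσn : ∀ n, 0 < σn n) (C : ℝ) (hσn_bdd : ∀ n, σn n ≤ C)
    (T : F →L[ℝ] G)
    (hT : ∀ f : F, HasSum (fun n => (σn n * inner (𝕜 := ℝ) (e n : F) f) • g' n) (T f))
    (q : ℝ → ℝ → ℝ) (M : ℝ)
    (hA1 : ∀ α : ℝ, 0 < α → ∀ n : ℕ, |q α (σn n)| ≤ M)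
    (hA3 : ∀ n : ℕ, Tendsto (fun α => q α (σn n)) (𝓝[>] 0) (𝓝 1))
    (f : F) :
    (∀ α : ℝ, 0 < α →
      Summable (fun n => (q α (σn n) * inner (𝕜 := ℝ) (e n : F) f) • (e n : F))) ∧
    (∀ α : ℝ, 0 < α →
      (∑' n, (q α (σn n) * inner (𝕜 := ℝ) (e n : F) f) • (e n : F)) =
      ∑' n, (q α (σn n) / σn n * inner (𝕜 := ℝ) (g' n) (T f)) • (e n : F)) ∧
    Tendsto
      (fun α => ‖(∑' n, (q α (σn n) * inner (𝕜 := ℝ) (e n : F) f) • (e n : F)) - f‖)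
      (𝓝[>] 0) (𝓝 0) := by
  have he := e.orthonormal
  set c : ℕ → ℝ := fun n => inner (𝕜 := ℝ) (e n : F) f with hc
  have hM0 : 0 ≤ M := le_trans (abs_nonneg _) (hA1 1 one_pos 0)
  -- summability of squared coefficients (Bessel/Parseval)
  have hc2 : Summable (fun n => ‖c n‖ ^ 2) := by
    have := e.summable_inner_mul_inner f f
    refine this.congr fun n => ?_
    simp [hc, real_inner_comm, Real.norm_eq_abs, sq_abs, sq]
  -- key summability criterion
  have key : ∀ a : ℕ → ℝ, Summable (fun n => ‖a n‖ ^ 2) →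
      Summable (fun n => a n • (e n : F)) := fun a ha =>
    (he.orthogonalFamily.summable_iff_norm_sq_summable a).2 ha
  -- part 1
  have part1 : ∀ α : ℝ, 0 < α →
      Summable (fun n => (q α (σn n) * c n) • (e n : F)) := by
    intro α hα
    refine key _ (Summable.of_nonneg_of_le (fun n => by positivity)
      (fun n => ?_) (hc2.mul_left (M ^ 2)))
    have hq := hA1 α hα n
    simp only [Real.norm_eq_abs, abs_mul, mul_pow, sq_abs]
    have h1 : q α (σn n) ^ 2 ≤ M ^ 2 := by
      rw [← sq_abs]; have := abs_nonneg (q α (σn n)); nlinarith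
    nlinarith [sq_nonneg (c n)]
  -- coefficients of T f against g'
  have hTf : ∀ n, inner (𝕜 := ℝ) (g' n) (T f) = σn n * c n := fun n =>
    inner_eq_of_hasSum_orthonormal hg' (hT f) n
  -- part 2
  have part2 : ∀ α : ℝ, 0 < α →
      (∑' n, (q α (σn n) * c n) • (e n : F)) =
      ∑' n, (q α (σn n) / σn n * inner (𝕜 := ℝ) (g' n) (T f)) • (e n : F) := by
    intro α hα
    refine tsum_congr fun n => ?_
    rw [hTf n]
    congr 1
    have hne := (hσn n).ne'
    field_simp
  -- convergence
  have hf_sum : HasSum (fun n => c n • (e n : F)) f := by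
    have := e.hasSum_repr f
    refine this.congr_fun fun n => ?_
    rw [e.repr_apply_apply]
  have hx : ∀ α : ℝ, 0 < α →
      HasSum (fun n => ((q α (σn n) - 1) * c n) • (e n : F))
        ((∑' n, (q α (σn n) * c n) • (e n : F)) - f) := by
    intro α hα
    have h1 := (part1 α hα).hasSum.sub hf_sum
    refine h1.congr_fun fun n => ?_
    rw [sub_mul, one_mul, sub_smul]
  -- norm squared identity
  have hnorm : ∀ α : ℝ, 0 < α →
      ‖(∑' n, (q α (σn n) * c n) • (e n : F)) - f‖ ^ 2 =
      ∑' n, ((q α (σn n) - 1) * c n) ^ 2 := by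
    intro α hα
    set x := (∑' n, (q α (σn n) * c n) • (e n : F)) - f with hxdef
    have hcoef : ∀ n, inner (𝕜 := ℝ) (e n : F) x = (q α (σn n) - 1) * c n := fun n =>
      inner_eq_of_hasSum_orthonormal he (hx α hα) n
    have hp := e.tsum_inner_mul_inner x x
    rw [real_inner_self_eq_norm_sq] at hp
    rw [← hp]
    refine tsum_congr fun n => ?_
    rw [real_inner_comm (e n : F) x, hcoef n, sq]
  -- tendsto of the series of squares
  have hS : Tendsto (fun α => ∑' n, ((q α (σn n) - 1) * c n) ^ 2) (𝓝[>] 0) (𝓝 0) := by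
    have H := tendsto_tsum_of_dominated_convergence (𝓕 := 𝓝[>] (0:ℝ))
      (f := fun α n => ((q α (σn n) - 1) * c n) ^ 2) (g := fun _ => (0 : ℝ))
      (bound := fun n => (M + 1) ^ 2 * ‖c n‖ ^ 2) (hc2.mul_left _) (fun n => ?_) ?_
    · simpa using H
    · have := (((hA3 n).sub_const 1).mul_const (c n)).pow 2
      simpa using this
    · filter_upwards [self_mem_nhdsWithin] with α hα n
      have hq := hA1 α (Set.mem_Ioi.mp hα) n
      have h1 : |q α (σn n) - 1| ≤ M + 1 := by
        calc |q α (σn n) - 1| ≤ |q α (σn n)| + 1 := by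
              simpa using abs_sub (q α (σn n)) 1
          _ ≤ M + 1 := by linarith
      have h2 : (q α (σn n) - 1) ^ 2 ≤ (M + 1) ^ 2 := by
        rw [← sq_abs]; have := abs_nonneg (q α (σn n) - 1); nlinarith
      rw [Real.norm_eq_abs, abs_of_nonneg (sq_nonneg _), Real.norm_eq_abs, sq_abs, mul_pow]
      nlinarith [sq_nonneg (c n)]
  refine ⟨part1, part2, ?_⟩
  have hsqrt : Tendsto (fun α => Real.sqrt (∑' n, ((q α (σn n) - 1) * c n) ^ 2))
      (𝓝[>] 0) (𝓝 0) := by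
    have := (Real.continuous_sqrt.tendsto 0).comp hS
    simpa [Function.comp_def] using this
  refine hsqrt.congr' ?_
  filter_upwards [self_mem_nhdsWithin] with α hα
  rw [← hnorm α (Set.mem_Ioi.mp hα), Real.sqrt_sq (norm_nonneg _)]
end
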